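/- Let H = (A, B, E) be an r-bounded bipartite hypergraph satisfying the φ-strong Haxell condition with φ > 2r² . Then H has a perfect matching (a set of pairwise vertex-disjoint hyperedges covering every vertex of A). -/

import Mathlib

namespace Stmt13Aux

variable {V : Type*} [DecidableEq V]

/-- The set of matching edges of `M` whose `B`-part meets the `B`-part of `f`. -/
def own (B : Finset V) (M : Finset (Finset V)) (f : Finset V) : Finset (Finset V) :=
  M.filter (fun m => ((f ∩ B) ∩ (m ∩ B)).Nonempty)

/-- The `A`-vertices of the owners of `f`. -/
def ownV (A B : Finset V) (M : Finset (Finset V)) (f : Finset V) : Finset V :=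
  (own B M f).biUnion (fun m => m ∩ A)

/-- Vertices brought into the tree by the list `L` of tree edges. -/
def sold (A B : Finset V) (M : Finset (Finset V)) (L : List (Finset V)) : Finset V :=
  L.foldr (fun f s => ownV A B M f ∪ s) ∅

def sset (a0 : V) (A B : Finset V) (M : Finset (Finset V)) (L : List (Finset V)) : Finset V :=
  insert a0 (sold A B M L)

/-- `M` is a perfect matching of `X` (inside `A`), using edges of `E`. -/
structure PM (A X : Finset V) (E : Finset (Finset V)) (M : Finset (Finset V)) : Prop where
  sub : M ⊆ E
  disj : ∀ f ∈ M, ∀ g ∈ M, f ≠ g → Disjoint f g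
  cov : ∀ a ∈ X, ∃ m ∈ M, a ∈ m
  ver : ∀ m ∈ M, m ∩ A ⊆ X
  Xsub : X ⊆ A

/-- ordering condition: each tree edge has its `A`-vertex among older vertices. -/
def goodOrder (a0 : V) (A B : Finset V) (M : Finset (Finset V)) : List (Finset V) → Prop
  | [] => True
  | f :: l => f ∩ A ⊆ sset a0 A B M l ∧ goodOrder a0 A B M l

structure Valid (A B X : Finset V) (E : Finset (Finset V)) (a0 : V)
    (M : Finset (Finset V)) (L : List (Finset V)) : Prop where
  pm : PM A X E M
  memE : ∀ f ∈ L, f ∈ E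
  pwB : L.Pairwise (fun f g => Disjoint (f ∩ B) (g ∩ B))
  ownNe : ∀ f ∈ L, (own B M f).Nonempty
  pwOwn : L.Pairwise (fun f g => Disjoint (ownV A B M f) (ownV A B M g))
  good : goodOrder a0 A B M L

/-- digit encoding of owner counts; oldest edge is most significant. -/
def dval (B : Finset V) (M : Finset (Finset V)) (r : ℕ) (L : List (Finset V)) : ℕ :=
  L.foldr (fun f acc => acc * (r + 2) + (own B M f).card) 0

/-- the potential. -/
def psi (B : Finset V) (M : Finset (Finset V)) (r : ℕ) (L : List (Finset V)) : ℕ :=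
  dval B M r L * (r + 2) ^ (B.card + 1 - L.length) + ((r + 2) ^ (B.card + 1 - L.length) - 1)

structure Setting (A B : Finset V) (E : Finset (Finset V)) (r : ℕ) (φ : ℝ) : Prop where
  hφ : 2 * (r : ℝ) ^ 2 < φ
  hr : 1 ≤ r
  hedge : ∀ e ∈ E, e ⊆ A ∪ B ∧ (e ∩ A).card = 1 ∧ 1 ≤ (e ∩ B).card ∧ (e ∩ B).card ≤ r
  hHaxell : ∀ S ⊆ A, ∀ T ⊆ B,
      (∀ e ∈ E, (e ∩ S).Nonempty → (e ∩ T).Nonempty) →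
      φ * (S.card : ℝ) ≤ (T.card : ℝ)

section Lemmas

/-! ### generic foldr-union lemmas -/

lemma mem_foldr_union {g : Finset V → Finset V} {L : List (Finset V)} {x : V} :
    x ∈ L.foldr (fun f s => g f ∪ s) ∅ ↔ ∃ f ∈ L, x ∈ g f := by
  induction L with
  | nil => simp
  | cons f l ih => simp [ih]

lemma subset_foldr_union {g : Finset V → Finset V} {L : List (Finset V)} {f : Finset V}
    (hf : f ∈ L) : g f ⊆ L.foldr (fun f s => g f ∪ s) ∅ := by
  intro x hx; exact mem_foldr_union.2 ⟨f, hf, hx⟩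

lemma length_le_card_foldr {g : Finset V → Finset V} {L : List (Finset V)}
    (hne : ∀ f ∈ L, (g f).Nonempty)
    (hpw : L.Pairwise (fun f f' => Disjoint (g f) (g f'))) :
    L.length ≤ (L.foldr (fun f s => g f ∪ s) ∅).card := by
  induction L with
  | nil => simp
  | cons f l ih =>
      have hd : Disjoint (g f) (l.foldr (fun f s => g f ∪ s) ∅) := by
        rw [Finset.disjoint_right]
        intro x hx hxg
        obtain ⟨f', hf', hxf'⟩ := mem_foldr_union.1 hx
        exact Finset.disjoint_left.1 ((List.pairwise_cons.1 hpw).1 f' hf') hxg hxf'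
      have hcu := Finset.card_union_of_disjoint hd
      simp only [List.foldr_cons, List.length_cons]
      rw [hcu]
      have h1 : 1 ≤ (g f).card := Finset.card_pos.2 (hne f (by simp))
      have h2 := ih (fun f' hf' => hne f' (by simp [hf'])) (List.pairwise_cons.1 hpw).2
      omega

lemma card_foldr_le {g : Finset V → Finset V} {L : List (Finset V)} {r : ℕ}
    (hb : ∀ f ∈ L, (g f).card ≤ r) :
    (L.foldr (fun f s => g f ∪ s) ∅).card ≤ r * L.length := by
  induction L with
  | nil => simp
  | cons f l ih =>
      simp only [List.foldr_cons, List.length_cons]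
      calc ((g f) ∪ l.foldr (fun f s => g f ∪ s) ∅).card
          ≤ (g f).card + (l.foldr (fun f s => g f ∪ s) ∅).card := Finset.card_union_le _ _
        _ ≤ r + r * l.length := by
            have h1 := ih (fun f' hf' => hb f' (by simp [hf']))
            have h2 := hb f (by simp)
            omega
        _ = r * (l.length + 1) := by ring

/-! ### own / ownV / sold basics -/

lemma own_subset {B : Finset V} {M : Finset (Finset V)} {f : Finset V} :
    own B M f ⊆ M := Finset.filter_subset _ _

lemma mem_own {B : Finset V} {M : Finset (Finset V)} {f m : Finset V} :
    m ∈ own B M f ↔ m ∈ M ∧ ((f ∩ B) ∩ (m ∩ B)).Nonempty := Finset.mem_filter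

lemma own_eq_empty_iff {B : Finset V} {M : Finset (Finset V)} {f : Finset V} :
    own B M f = ∅ ↔ ∀ m ∈ M, Disjoint (f ∩ B) (m ∩ B) := by
  constructor
  · intro h m hm
    rw [Finset.disjoint_iff_inter_eq_empty, ← Finset.not_nonempty_iff_eq_empty]
    intro hne
    exact Finset.eq_empty_iff_forall_notMem.1 h m (mem_own.2 ⟨hm, hne⟩)
  · intro h
    apply Finset.eq_empty_iff_forall_notMem.2
    intro m hm
    obtain ⟨hmM, hne⟩ := mem_own.1 hm
    rw [Finset.disjoint_iff_inter_eq_empty.1 (h m hmM)] at hne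
    exact Finset.not_nonempty_empty hne

lemma mem_ownV {A B : Finset V} {M : Finset (Finset V)} {f : Finset V} {x : V} :
    x ∈ ownV A B M f ↔ ∃ m ∈ own B M f, x ∈ m ∩ A := by
  simp [ownV]

lemma mem_sold {A B : Finset V} {M : Finset (Finset V)} {L : List (Finset V)} {x : V} :
    x ∈ sold A B M L ↔ ∃ f ∈ L, x ∈ ownV A B M f := mem_foldr_union

lemma sset_subset_A {a0 : V} {A B X : Finset V} {E M : Finset (Finset V)}
    {L : List (Finset V)}
    (ha0 : a0 ∈ A) (hpm : PM A X E M) : sset a0 A B M L ⊆ A := by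
  intro x hx
  rcases Finset.mem_insert.1 hx with h | h
  · exact h ▸ ha0
  · obtain ⟨f, _, hf⟩ := mem_sold.1 h
    obtain ⟨m, _, hm⟩ := mem_ownV.1 hf
    exact (Finset.mem_inter.1 hm).2

lemma sold_subset_X {A B X : Finset V} {E M : Finset (Finset V)}
    {L : List (Finset V)}
    (hpm : PM A X E M) : sold A B M L ⊆ X := by
  intro x hx
  obtain ⟨f, _, hf⟩ := mem_sold.1 hx
  obtain ⟨m, hmo, hm⟩ := mem_ownV.1 hf
  exact hpm.ver m (own_subset hmo) hm

/-- a vertex of `X` lies in a unique matching edge. -/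
lemma pm_unique {A X : Finset V} {E M : Finset (Finset V)} (hpm : PM A X E M)
    {a : V} {m m' : Finset V} (hm : m ∈ M) (hm' : m' ∈ M) (ha : a ∈ m) (ha' : a ∈ m') :
    m = m' := by
  by_contra hne
  exact Finset.disjoint_left.1 (hpm.disj m hm m' hm' hne) ha ha'

lemma edge_vertex {A B : Finset V} {E : Finset (Finset V)} {r : ℕ} {φ : ℝ}
    (hs : Setting A B E r φ) {e : Finset V} (he : e ∈ E) : ∃ a, e ∩ A = {a} :=
  Finset.card_eq_one.1 (hs.hedge e he).2.1

/-! ### cardinality bounds -/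

lemma card_own_le_inter {B : Finset V} {M : Finset (Finset V)} {f : Finset V}
    (hdisj : ∀ g ∈ M, ∀ g' ∈ M, g ≠ g' → Disjoint g g') :
    (own B M f).card ≤ (f ∩ B).card := by
  classical
  have hpd : (own B M f : Set (Finset V)).PairwiseDisjoint
      (fun m => (f ∩ B) ∩ (m ∩ B)) := by
    intro m hm m' hm' hne
    have := hdisj m (own_subset hm) m' (own_subset hm') hne
    exact (this.mono Finset.inter_subset_left Finset.inter_subset_left).mono
      Finset.inter_subset_right Finset.inter_subset_right
  have hcard := Finset.card_biUnion (s := own B M f)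
    (t := fun m => (f ∩ B) ∩ (m ∩ B)) (fun m hm m' hm' h => hpd hm hm' h)
  have hsub : (own B M f).biUnion (fun m => (f ∩ B) ∩ (m ∩ B)) ⊆ f ∩ B :=
    Finset.biUnion_subset.2 (fun m _ => Finset.inter_subset_left)
  have hge : (own B M f).card ≤
      ∑ m ∈ own B M f, ((f ∩ B) ∩ (m ∩ B)).card := by
    rw [Finset.card_eq_sum_ones (own B M f)]
    refine Finset.sum_le_sum ?_
    intro m hm
    exact Finset.card_pos.2 (mem_own.1 hm).2
  calc (own B M f).card ≤ ∑ m ∈ own B M f, ((f ∩ B) ∩ (m ∩ B)).card := hge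
    _ = ((own B M f).biUnion (fun m => (f ∩ B) ∩ (m ∩ B))).card := hcard.symm
    _ ≤ (f ∩ B).card := Finset.card_le_card hsub

/-- blocked matching edges (those meeting the tree vertex set). -/
def msE (a0 : V) (A B : Finset V) (M : Finset (Finset V)) (L : List (Finset V)) :
    Finset (Finset V) :=
  M.filter (fun m => (m ∩ sset a0 A B M L).Nonempty)

/-- the candidate cover. -/
def treeT (a0 : V) (A B : Finset V) (M : Finset (Finset V)) (L : List (Finset V)) :
    Finset V :=
  (L.foldr (fun f s => (f ∩ B) ∪ s) ∅) ∪ (msE a0 A B M L).biUnion (fun m => m ∩ B)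

lemma card_msE_le {a0 : V} {A B X : Finset V} {E M : Finset (Finset V)}
    {L : List (Finset V)} {r : ℕ} {φ : ℝ}
    (hs : Setting A B E r φ) (ha0A : a0 ∈ A) (ha0X : a0 ∉ X) (hpm : PM A X E M) :
    (msE a0 A B M L).card ≤ (sold A B M L).card := by
  classical
  set S := sset a0 A B M L with hSdef
  have hSA : S ⊆ A := sset_subset_A ha0A hpm
  have hpd : ∀ m ∈ msE a0 A B M L, ∀ m' ∈ msE a0 A B M L, m ≠ m' →
      Disjoint (m ∩ A ∩ S) (m' ∩ A ∩ S) := by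
    intro m hm m' hm' hne
    have := hpm.disj m (Finset.filter_subset _ _ hm) m' (Finset.filter_subset _ _ hm') hne
    exact (this.mono Finset.inter_subset_left Finset.inter_subset_left).mono
      Finset.inter_subset_left Finset.inter_subset_left
  have hcard := Finset.card_biUnion hpd
  have hge : (msE a0 A B M L).card ≤ ∑ m ∈ msE a0 A B M L, (m ∩ A ∩ S).card := by
    rw [Finset.card_eq_sum_ones (msE a0 A B M L)]
    refine Finset.sum_le_sum ?_
    intro m hm
    obtain ⟨x, hx⟩ := (Finset.mem_filter.1 hm).2
    have hx' := Finset.mem_inter.1 hx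
    exact Finset.card_pos.2 ⟨x, Finset.mem_inter.2
      ⟨Finset.mem_inter.2 ⟨hx'.1, hSA hx'.2⟩, hx'.2⟩⟩
  have hsub : (msE a0 A B M L).biUnion (fun m => m ∩ A ∩ S) ⊆ sold A B M L := by
    intro x hx
    obtain ⟨m, hm, hxm⟩ := Finset.mem_biUnion.1 hx
    have hxm' := Finset.mem_inter.1 hxm
    have hxX : x ∈ X := hpm.ver m (Finset.filter_subset _ _ hm) hxm'.1
    have hxS : x ∈ S := hxm'.2
    rcases Finset.mem_insert.1 hxS with h | h
    · exact absurd (h ▸ hxX) ha0X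
    · exact h
  calc (msE a0 A B M L).card ≤ ∑ m ∈ msE a0 A B M L, (m ∩ A ∩ S).card := hge
    _ = ((msE a0 A B M L).biUnion (fun m => m ∩ A ∩ S)).card := hcard.symm
    _ ≤ (sold A B M L).card := Finset.card_le_card hsub

lemma ownV_nonempty {A B X : Finset V} {E M : Finset (Finset V)} {r : ℕ} {φ : ℝ}
    (hs : Setting A B E r φ) (hpm : PM A X E M) {f : Finset V}
    (h : (own B M f).Nonempty) : (ownV A B M f).Nonempty := by
  obtain ⟨m, hm⟩ := h
  have hmE : m ∈ E := hpm.sub (own_subset hm)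
  obtain ⟨a, ha⟩ := Finset.card_eq_one.1 (hs.hedge m hmE).2.1
  exact ⟨a, mem_ownV.2 ⟨m, hm, ha ▸ Finset.mem_singleton_self a⟩⟩

lemma length_le_card_sold {a0 : V} {A B X : Finset V} {E M : Finset (Finset V)}
    {L : List (Finset V)} {r : ℕ} {φ : ℝ}
    (hs : Setting A B E r φ) (hv : Valid A B X E a0 M L) :
    L.length ≤ (sold A B M L).card :=
  length_le_card_foldr (fun f hf => ownV_nonempty hs hv.pm (hv.ownNe f hf)) hv.pwOwn

lemma length_le_cardB {a0 : V} {A B X : Finset V} {E M : Finset (Finset V)}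
    {L : List (Finset V)} {r : ℕ} {φ : ℝ}
    (hs : Setting A B E r φ) (hv : Valid A B X E a0 M L) :
    L.length ≤ B.card := by
  have h1 : L.length ≤ (L.foldr (fun f s => (f ∩ B) ∪ s) ∅).card :=
    length_le_card_foldr
      (fun f hf => Finset.card_pos.1 (le_trans (hs.hedge f (hv.memE f hf)).2.2.1 le_rfl))
      hv.pwB
  have h2 : (L.foldr (fun f s => (f ∩ B) ∪ s) ∅) ⊆ B := by
    intro x hx
    obtain ⟨f, _, hxf⟩ := mem_foldr_union.1 hx
    exact (Finset.mem_inter.1 hxf).2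
  exact le_trans h1 (Finset.card_le_card h2)

/-- The key counting step: the tree cover cannot cover all edges at `S`. -/
lemma exists_uncovered {a0 : V} {A B X : Finset V} {E M : Finset (Finset V)}
    {L : List (Finset V)} {r : ℕ} {φ : ℝ}
    (hs : Setting A B E r φ) (ha0A : a0 ∈ A) (ha0X : a0 ∉ X)
    (hv : Valid A B X E a0 M L) :
    ∃ e ∈ E, (e ∩ sset a0 A B M L).Nonempty ∧ e ∩ treeT a0 A B M L = ∅ := by
  classical
  by_contra hcon
  push_neg at hcon
  have hcover : ∀ e ∈ E, (e ∩ sset a0 A B M L).Nonempty →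
      (e ∩ treeT a0 A B M L).Nonempty := by
    intro e he hne
    exact hcon e he hne
  have hSA : sset a0 A B M L ⊆ A := sset_subset_A ha0A hv.pm
  have hTB : treeT a0 A B M L ⊆ B := by
    intro x hx
    rcases Finset.mem_union.1 hx with h | h
    · obtain ⟨f, _, hxf⟩ := mem_foldr_union.1 h
      exact (Finset.mem_inter.1 hxf).2
    · obtain ⟨m, _, hxm⟩ := Finset.mem_biUnion.1 h
      exact (Finset.mem_inter.1 hxm).2
  have key := hs.hHaxell _ hSA _ hTB hcover
  -- now the numeric contradiction
  have ha0sold : a0 ∉ sold A B M L := fun h => ha0X (sold_subset_X hv.pm h)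
  have hScard : (sset a0 A B M L).card = (sold A B M L).card + 1 := by
    rw [sset, Finset.card_insert_of_notMem ha0sold]
  have hlen : L.length ≤ (sold A B M L).card := length_le_card_sold hs hv
  have hbbu : (L.foldr (fun f s => (f ∩ B) ∪ s) ∅).card ≤ r * L.length :=
    card_foldr_le (fun f hf => (hs.hedge f (hv.memE f hf)).2.2.2)
  have hmsB : ((msE a0 A B M L).biUnion (fun m => m ∩ B)).card
      ≤ r * (msE a0 A B M L).card := by
    calc ((msE a0 A B M L).biUnion (fun m => m ∩ B)).card
        ≤ ∑ m ∈ msE a0 A B M L, (m ∩ B).card := Finset.card_biUnion_le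
      _ ≤ ∑ _m ∈ msE a0 A B M L, r := by
          refine Finset.sum_le_sum ?_
          intro m hm
          exact (hs.hedge m (hv.pm.sub (Finset.filter_subset _ _ hm))).2.2.2
      _ = (msE a0 A B M L).card * r := by rw [Finset.sum_const, smul_eq_mul]
      _ = r * (msE a0 A B M L).card := mul_comm _ _
  have hmsE : (msE a0 A B M L).card ≤ (sold A B M L).card :=
    card_msE_le hs ha0A ha0X hv.pm
  have hT : (treeT a0 A B M L).card ≤ 2 * r * (sold A B M L).card := by
    calc (treeT a0 A B M L).card
        ≤ (L.foldr (fun f s => (f ∩ B) ∪ s) ∅).card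
          + ((msE a0 A B M L).biUnion (fun m => m ∩ B)).card := Finset.card_union_le _ _
      _ ≤ r * (sold A B M L).card + r * (sold A B M L).card := by
          have := le_trans hbbu (Nat.mul_le_mul_left r hlen)
          have := Nat.mul_le_mul_left r hmsE
          omega
      _ = 2 * r * (sold A B M L).card := by ring
  -- real arithmetic contradiction
  have hrr : (1 : ℝ) ≤ (r : ℝ) := by exact_mod_cast hs.hr
  set c := ((sold A B M L).card : ℝ) with hc
  have hc0 : 0 ≤ c := Nat.cast_nonneg _
  have hTr : ((treeT a0 A B M L).card : ℝ) ≤ 2 * (r : ℝ) * c := by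
    have h := (Nat.cast_le (α := ℝ)).2 hT
    push_cast at h
    linarith
  have hkey : φ * (c + 1) ≤ 2 * (r : ℝ) * c := by
    have hS : ((sset a0 A B M L).card : ℝ) = c + 1 := by
      rw [hScard]; push_cast; ring
    calc φ * (c + 1) = φ * ((sset a0 A B M L).card : ℝ) := by rw [hS]
      _ ≤ ((treeT a0 A B M L).card : ℝ) := key
      _ ≤ 2 * (r : ℝ) * c := hTr
  have hφ := hs.hφ
  nlinarith [hkey, hφ, hc0, hrr, sq_nonneg ((r : ℝ) - 1)]

/-! ### swap and congruence lemmas -/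

lemma own_swap_of_disj {B : Finset V} {M : Finset (Finset V)} {m_a e g : Finset V}
    (hge : Disjoint (g ∩ B) (e ∩ B)) :
    own B (insert e (M.erase m_a)) g = (own B M g).erase m_a := by
  have hgeE : (g ∩ B) ∩ (e ∩ B) = ∅ := Finset.disjoint_iff_inter_eq_empty.1 hge
  ext m
  simp only [mem_own, Finset.mem_insert, Finset.mem_erase]
  constructor
  · rintro ⟨(rfl | ⟨hne, hmM⟩), hN⟩
    · rw [hgeE] at hN; exact absurd hN Finset.not_nonempty_empty
    · exact ⟨hne, hmM, hN⟩
  · rintro ⟨hne, hmM, hN⟩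
    exact ⟨Or.inr ⟨hne, hmM⟩, hN⟩

lemma own_swap_no_ma {B : Finset V} {M : Finset (Finset V)} {m_a e g : Finset V}
    (hge : Disjoint (g ∩ B) (e ∩ B)) (hma : m_a ∉ own B M g) :
    own B (insert e (M.erase m_a)) g = own B M g := by
  rw [own_swap_of_disj hge, Finset.erase_eq_of_notMem hma]

lemma ownV_congr {A B : Finset V} {M M' : Finset (Finset V)} {f : Finset V}
    (h : own B M' f = own B M f) : ownV A B M' f = ownV A B M f := by
  simp [ownV, h]

lemma sold_congr {A B : Finset V} {M M' : Finset (Finset V)} {L : List (Finset V)}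
    (h : ∀ f ∈ L, own B M' f = own B M f) : sold A B M' L = sold A B M L := by
  induction L with
  | nil => rfl
  | cons f l ih =>
      simp only [sold, List.foldr_cons]
      rw [ownV_congr (h f (by simp))]
      have := ih (fun f' hf' => h f' (by simp [hf']))
      simp only [sold] at this
      rw [this]

lemma sset_congr {a0 : V} {A B : Finset V} {M M' : Finset (Finset V)} {L : List (Finset V)}
    (h : ∀ f ∈ L, own B M' f = own B M f) : sset a0 A B M' L = sset a0 A B M L := by
  simp [sset, sold_congr h]

lemma goodOrder_congr {a0 : V} {A B : Finset V} {M M' : Finset (Finset V)}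
    {L : List (Finset V)}
    (h : ∀ f ∈ L, own B M' f = own B M f) (hg : goodOrder a0 A B M L) :
    goodOrder a0 A B M' L := by
  induction L with
  | nil => trivial
  | cons f l ih =>
      refine ⟨?_, ih (fun f' hf' => h f' (by simp [hf'])) hg.2⟩
      rw [sset_congr (fun f' hf' => h f' (by simp [hf']))]
      exact hg.1

lemma dval_congr {B : Finset V} {M M' : Finset (Finset V)} {r : ℕ} {L : List (Finset V)}
    (h : ∀ f ∈ L, own B M' f = own B M f) : dval B M' r L = dval B M r L := by
  induction L with
  | nil => rfl
  | cons f l ih =>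
      simp only [dval, List.foldr_cons]
      rw [h f (by simp)]
      have := ih (fun f' hf' => h f' (by simp [hf']))
      simp only [dval] at this
      rw [this]

lemma goodOrder_suffix {a0 : V} {A B : Finset V} {M : Finset (Finset V)}
    {l₁ l₂ : List (Finset V)}
    (h : goodOrder a0 A B M (l₁ ++ l₂)) : goodOrder a0 A B M l₂ := by
  induction l₁ with
  | nil => exact h
  | cons f l ih => exact ih h.2

lemma pm_swap {A B X : Finset V} {E : Finset (Finset V)} {r : ℕ} {φ : ℝ}
    (hs : Setting A B E r φ) {M : Finset (Finset V)} (hpm : PM A X E M)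
    {a : V} {m_a e : Finset V}
    (hma : m_a ∈ M) (hmaA : m_a ∩ A = {a}) (he : e ∈ E) (heA : e ∩ A = {a})
    (hfree : ∀ m ∈ M, Disjoint (e ∩ B) (m ∩ B)) :
    PM A X E (insert e (M.erase m_a)) := by
  have haX : a ∈ X := hpm.ver m_a hma (hmaA ▸ Finset.mem_singleton_self a)
  have hae : a ∈ e := Finset.mem_inter.1 (heA ▸ Finset.mem_singleton_self a) |>.1
  have hdisj_e : ∀ m ∈ M.erase m_a, Disjoint e m := by
    intro m hm
    have hmM : m ∈ M := Finset.mem_of_mem_erase hm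
    rw [Finset.disjoint_left]
    intro x hxe hxm
    rcases Finset.mem_union.1 ((hs.hedge e he).1 hxe) with hxA | hxB
    · have : x = a := Finset.mem_singleton.1 (heA ▸ Finset.mem_inter.2 ⟨hxe, hxA⟩)
      subst this
      have : m = m_a := pm_unique hpm hmM hma hxm (hmaA ▸ Finset.mem_singleton_self x
        |> Finset.mem_inter.1 |>.1)
      exact (Finset.ne_of_mem_erase hm) this
    · exact Finset.disjoint_left.1 (hfree m hmM)
        (Finset.mem_inter.2 ⟨hxe, hxB⟩) (Finset.mem_inter.2 ⟨hxm, hxB⟩)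
  refine ⟨?_, ?_, ?_, ?_, hpm.Xsub⟩
  · exact Finset.insert_subset he ((Finset.erase_subset _ _).trans hpm.sub)
  · intro f hf g hg hne
    rcases Finset.mem_insert.1 hf with rfl | hf' <;> rcases Finset.mem_insert.1 hg with rfl | hg'
    · exact absurd rfl hne
    · exact hdisj_e g hg'
    · exact (hdisj_e f hf').symm
    · exact hpm.disj f (Finset.mem_of_mem_erase hf') g (Finset.mem_of_mem_erase hg') hne
  · intro x hx
    obtain ⟨m, hm, hxm⟩ := hpm.cov x hx
    by_cases hmm : m = m_a
    · subst hmm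
      have hxa : x = a := Finset.mem_singleton.1
        (hmaA ▸ Finset.mem_inter.2 ⟨hxm, hpm.Xsub hx⟩)
      exact ⟨e, Finset.mem_insert_self _ _, hxa ▸ hae⟩
    · exact ⟨m, Finset.mem_insert_of_mem (Finset.mem_erase.2 ⟨hmm, hm⟩), hxm⟩
  · intro m hm
    rcases Finset.mem_insert.1 hm with rfl | hm'
    · rw [heA]; exact Finset.singleton_subset_iff.2 haX
    · exact hpm.ver m (Finset.mem_of_mem_erase hm')

lemma pm_extend {A B X : Finset V} {E : Finset (Finset V)} {r : ℕ} {φ : ℝ}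
    (hs : Setting A B E r φ) {M : Finset (Finset V)} (hpm : PM A X E M)
    {a0 : V} {e : Finset V} (ha0A : a0 ∈ A) (ha0X : a0 ∉ X)
    (he : e ∈ E) (heA : e ∩ A = {a0})
    (hfree : ∀ m ∈ M, Disjoint (e ∩ B) (m ∩ B)) :
    PM A (insert a0 X) E (insert e M) := by
  have ha0e : a0 ∈ e := Finset.mem_inter.1 (heA ▸ Finset.mem_singleton_self a0) |>.1
  have hdisj_e : ∀ m ∈ M, Disjoint e m := by
    intro m hm
    rw [Finset.disjoint_left]
    intro x hxe hxm
    rcases Finset.mem_union.1 ((hs.hedge e he).1 hxe) with hxA | hxB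
    · have : x = a0 := Finset.mem_singleton.1 (heA ▸ Finset.mem_inter.2 ⟨hxe, hxA⟩)
      subst this
      exact ha0X (hpm.ver m hm (Finset.mem_inter.2 ⟨hxm, hxA⟩))
    · exact Finset.disjoint_left.1 (hfree m hm)
        (Finset.mem_inter.2 ⟨hxe, hxB⟩) (Finset.mem_inter.2 ⟨hxm, hxB⟩)
  refine ⟨?_, ?_, ?_, ?_, ?_⟩
  · exact Finset.insert_subset he hpm.sub
  · intro f hf g hg hne
    rcases Finset.mem_insert.1 hf with rfl | hf' <;> rcases Finset.mem_insert.1 hg with rfl | hg'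
    · exact absurd rfl hne
    · exact hdisj_e g hg'
    · exact (hdisj_e f hf').symm
    · exact hpm.disj f hf' g hg' hne
  · intro x hx
    rcases Finset.mem_insert.1 hx with rfl | hx'
    · exact ⟨e, Finset.mem_insert_self _ _, ha0e⟩
    · obtain ⟨m, hm, hxm⟩ := hpm.cov x hx'
      exact ⟨m, Finset.mem_insert_of_mem hm, hxm⟩
  · intro m hm
    rcases Finset.mem_insert.1 hm with rfl | hm'
    · rw [heA]; exact Finset.singleton_subset_iff.2 (Finset.mem_insert_self _ _)
    · exact (hpm.ver m hm').trans (Finset.subset_insert _ _)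
  · exact Finset.insert_subset ha0A hpm.Xsub

/-! ### potential lemmas -/

lemma dval_cons {B : Finset V} {M : Finset (Finset V)} {r : ℕ} {f : Finset V}
    {L : List (Finset V)} :
    dval B M r (f :: L) = dval B M r L * (r + 2) + (own B M f).card := rfl

lemma dval_append_ge {B : Finset V} {M : Finset (Finset V)} {r : ℕ}
    {l₁ l₂ : List (Finset V)} :
    dval B M r l₂ * (r + 2) ^ l₁.length ≤ dval B M r (l₁ ++ l₂) := by
  induction l₁ with
  | nil => simp
  | cons f l ih =>
      have : dval B M r (f :: (l ++ l₂)) = dval B M r (l ++ l₂) * (r + 2)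
          + (own B M f).card := rfl
      simp only [List.cons_append, this, List.length_cons, pow_succ]
      calc dval B M r l₂ * ((r + 2) ^ l.length * (r + 2))
          = (dval B M r l₂ * (r + 2) ^ l.length) * (r + 2) := by ring
        _ ≤ dval B M r (l ++ l₂) * (r + 2) := Nat.mul_le_mul_right _ ih
        _ ≤ dval B M r (l ++ l₂) * (r + 2) + (own B M f).card := Nat.le_add_right _ _

lemma psi_append_lt {B : Finset V} {M : Finset (Finset V)} {r : ℕ} {f : Finset V}
    {L : List (Finset V)} (hlen : L.length ≤ B.card) (hc : (own B M f).card ≤ r) :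
    psi B M r (f :: L) < psi B M r L := by
  set K := r + 2 with hK
  set c := (own B M f).card with hcdef
  set d := dval B M r L with hd
  have hu : B.card + 1 - (f :: L).length + 1 = B.card + 1 - L.length := by
    simp only [List.length_cons]; omega
  set u := B.card + 1 - (f :: L).length with hudef
  have hdv : dval B M r (f :: L) = d * K + c := rfl
  have hk1 : 1 ≤ K ^ u := Nat.one_le_pow _ _ (by omega)
  have e1 : psi B M r (f :: L) = (d * K + c) * K ^ u + (K ^ u - 1) := by
    simp only [psi, hdv]
    rfl
  have e2 : psi B M r L = d * (K ^ u * K) + (K ^ u * K - 1) := by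
    simp only [psi, ← hu, pow_succ]
    rfl
  rw [e1, e2]
  have hcK : c + 2 ≤ K := by omega
  have key : (d * K + c) * K ^ u + K ^ u < d * (K ^ u * K) + K ^ u * K := by
    have h1 : (d * K + c) * K ^ u + K ^ u = d * (K ^ u * K) + (c + 1) * K ^ u := by ring
    have h2 : (c + 1) * K ^ u < K * K ^ u :=
      Nat.mul_lt_mul_of_lt_of_le (by omega) le_rfl (by omega)
    rw [h1]
    have : K * K ^ u = K ^ u * K := mul_comm _ _
    omega
  omega

lemma psi_trunc_lt {B : Finset V} {M M₂ : Finset (Finset V)} {r : ℕ}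
    {l₁ l₂ : List (Finset V)} {f : Finset V}
    (hlen : (l₁ ++ f :: l₂).length ≤ B.card + 1)
    (hown : ∀ g ∈ l₂, own B M₂ g = own B M g)
    (hcard : (own B M₂ f).card < (own B M f).card) :
    psi B M₂ r (f :: l₂) < psi B M r (l₁ ++ f :: l₂) := by
  set K := r + 2 with hK
  set N := B.card + 1 with hN
  have hlen' : l₁.length + (l₂.length + 1) ≤ N := by
    simpa [List.length_append] using hlen
  set u := N - (l₁ ++ f :: l₂).length with hu
  have hexp : N - (f :: l₂).length = l₁.length + u := by
    simp only [hu, List.length_append, List.length_cons]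
    omega
  set P := K ^ (l₁.length + u) with hP
  have hP1 : 1 ≤ P := Nat.one_le_pow _ _ (by omega)
  set c := (own B M f).card with hc
  set c₂ := (own B M₂ f).card with hc2
  set d := dval B M r l₂ with hd
  have hdval2 : dval B M₂ r (f :: l₂) = d * K + c₂ := by
    rw [dval_cons, dval_congr hown]
  have hdval : dval B M r (f :: l₂) = d * K + c := rfl
  have hpsi2 : psi B M₂ r (f :: l₂) = (d * K + c₂) * P + (P - 1) := by
    simp only [psi, hdval2, hexp, hP]
    rw [← hN, hexp]
  have hlb : (d * K + c) * P ≤ psi B M r (l₁ ++ f :: l₂) := by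
    have h1 : dval B M r (f :: l₂) * K ^ l₁.length ≤ dval B M r (l₁ ++ f :: l₂) :=
      dval_append_ge
    have h2 : (d * K + c) * P = (dval B M r (f :: l₂) * K ^ l₁.length) * K ^ u := by
      rw [hdval, hP, pow_add]; ring
    calc (d * K + c) * P = (dval B M r (f :: l₂) * K ^ l₁.length) * K ^ u := h2
      _ ≤ dval B M r (l₁ ++ f :: l₂) * K ^ u := Nat.mul_le_mul_right _ h1
      _ ≤ dval B M r (l₁ ++ f :: l₂) * K ^ (N - (l₁ ++ f :: l₂).length)
          + (K ^ (N - (l₁ ++ f :: l₂).length) - 1) := Nat.le_add_right _ _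
      _ = psi B M r (l₁ ++ f :: l₂) := rfl
  have hub : (d * K + c₂) * P + (P - 1) < (d * K + c) * P := by
    have h1 : (d * K + c₂) * P + P ≤ (d * K + c) * P := by
      have : (d * K + c₂ + 1) * P ≤ (d * K + c) * P :=
        Nat.mul_le_mul_right _ (by omega)
      calc (d * K + c₂) * P + P = (d * K + c₂ + 1) * P := by ring
        _ ≤ (d * K + c) * P := this
    omega
  rw [hpsi2]
  exact lt_of_lt_of_le hub hlb

lemma ownV_mono {A B : Finset V} {M M₂ : Finset (Finset V)} {f : Finset V}
    (h : own B M₂ f ⊆ own B M f) : ownV A B M₂ f ⊆ ownV A B M f := by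
  intro x hx
  obtain ⟨m, hm, hxm⟩ := mem_ownV.1 hx
  exact mem_ownV.2 ⟨m, h hm, hxm⟩

/-- The cascade: given a free edge pointing at a tree vertex, either we finish,
or we can truncate the tree and strictly decrease an owner count. -/
lemma cascade {a0 : V} {A B X : Finset V} {E : Finset (Finset V)} {r : ℕ} {φ : ℝ}
    (hs : Setting A B E r φ) (ha0A : a0 ∈ A) (ha0X : a0 ∉ X) :
    ∀ (n : ℕ) (L : List (Finset V)) (M : Finset (Finset V)) (e : Finset V) (a : V),
      L.length ≤ n →
      Valid A B X E a0 M L → e ∈ E → e ∩ A = {a} →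
      (∀ m ∈ M, Disjoint (e ∩ B) (m ∩ B)) →
      (∀ g ∈ L, Disjoint (e ∩ B) (g ∩ B)) →
      a ∈ sset a0 A B M L →
      (∃ M', PM A (insert a0 X) E M') ∨
      (∃ (M₂ : Finset (Finset V)) (l₁ l₂ : List (Finset V)) (f : Finset V),
        L = l₁ ++ f :: l₂ ∧ Valid A B X E a0 M₂ (f :: l₂) ∧
        (∀ g ∈ l₂, own B M₂ g = own B M g) ∧
        (own B M₂ f).card < (own B M f).card) := by
  intro n
  induction n with
  | zero =>
      intro L M e a hlen hv he heA hfree hLdis haS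
      rcases Finset.mem_insert.1 haS with rfl | hsold
      · exact Or.inl ⟨insert e M, pm_extend hs hv.pm ha0A ha0X he heA hfree⟩
      · have hL0 : L = [] := List.length_eq_zero_iff.1 (Nat.le_zero.1 hlen)
        subst hL0
        simp [sold] at hsold
  | succ n ih =>
      intro L M e a hlen hv he heA hfree hLdis haS
      rcases Finset.mem_insert.1 haS with rfl | hsold
      · exact Or.inl ⟨insert e M, pm_extend hs hv.pm ha0A ha0X he heA hfree⟩
      obtain ⟨f, hfL, haf⟩ := mem_sold.1 hsold
      obtain ⟨l₁, l₂, rfl⟩ := List.append_of_mem hfL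
      obtain ⟨m_a, hmao, hama⟩ := mem_ownV.1 haf
      have hmaM : m_a ∈ M := own_subset hmao
      have hmaE : m_a ∈ E := hv.pm.sub hmaM
      have hmaA : m_a ∩ A = {a} := by
        obtain ⟨b, hb⟩ := edge_vertex hs hmaE
        rw [hb] at hama ⊢
        rw [Finset.mem_singleton.1 hama]
      set M₂ := insert e (M.erase m_a) with hM₂
      have hpm₂ : PM A X E M₂ := pm_swap hs hv.pm hmaM hmaA he heA hfree
      -- sub-pairwise structures on the suffix
      have hsubl : (f :: l₂).Sublist (l₁ ++ f :: l₂) := List.sublist_append_right l₁ _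
      have hpwB₂ : (f :: l₂).Pairwise (fun g g' => Disjoint (g ∩ B) (g' ∩ B)) :=
        hv.pwB.sublist hsubl
      have hpwOwnM : (f :: l₂).Pairwise
          (fun g g' => Disjoint (ownV A B M g) (ownV A B M g')) :=
        hv.pwOwn.sublist hsubl
      have hmemsuf : ∀ g ∈ f :: l₂, g ∈ l₁ ++ f :: l₂ := fun g hg => hsubl.mem hg
      -- owners of strictly older edges are untouched
      have hfB : ∀ g ∈ l₂, own B M₂ g = own B M g := by
        intro g hg
        refine own_swap_no_ma ((hLdis g (hmemsuf g (by simp [hg]))).symm) ?_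
        intro hmem
        have hag : a ∈ ownV A B M g := mem_ownV.2 ⟨m_a, hmem, hama⟩
        exact Finset.disjoint_left.1
          ((List.pairwise_cons.1 hpwOwnM).1 g hg) haf hag
      have hofa : own B M₂ f = (own B M f).erase m_a :=
        own_swap_of_disj ((hLdis f (hmemsuf f (by simp))).symm)
      have hcard : (own B M₂ f).card < (own B M f).card := by
        rw [hofa]
        exact Finset.card_erase_lt_of_mem hmao
      have hgood_f : goodOrder a0 A B M (f :: l₂) := goodOrder_suffix hv.good
      have hsset_tail : sset a0 A B M₂ l₂ = sset a0 A B M l₂ := sset_congr hfB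
      have hgood₂tail : goodOrder a0 A B M₂ l₂ := goodOrder_congr hfB hgood_f.2
      have hgood₂ : goodOrder a0 A B M₂ (f :: l₂) := by
        refine ⟨?_, hgood₂tail⟩
        rw [hsset_tail]
        exact hgood_f.1
      have hmemE₂ : ∀ g ∈ f :: l₂, g ∈ E := fun g hg => hv.memE g (hmemsuf g hg)
      have hownVsub : ownV A B M₂ f ⊆ ownV A B M f :=
        ownV_mono (by rw [hofa]; exact Finset.erase_subset _ _)
      have hpwOwn₂ : (f :: l₂).Pairwise
          (fun g g' => Disjoint (ownV A B M₂ g) (ownV A B M₂ g')) := by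
        refine List.pairwise_cons.2 ⟨?_, ?_⟩
        · intro g hg
          rw [ownV_congr (hfB g hg)]
          exact ((List.pairwise_cons.1 hpwOwnM).1 g hg).mono_left hownVsub
        · refine ((List.pairwise_cons.1 hpwOwnM).2).imp_of_mem ?_
          intro g g' hg hg' hd
          rw [ownV_congr (hfB g hg), ownV_congr (hfB g' hg')]
          exact hd
      by_cases hne : (own B M₂ f).Nonempty
      · -- the truncated tree is still a valid state
        refine Or.inr ⟨M₂, l₁, l₂, f, rfl, ?_, hfB, hcard⟩
        refine ⟨hpm₂, hmemE₂, hpwB₂, ?_, hpwOwn₂, hgood₂⟩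
        intro g hg
        rcases List.mem_cons.1 hg with rfl | hg'
        · exact hne
        · rw [hfB g hg']
          exact hv.ownNe g (hmemsuf g hg)
      · -- `f` has become free: cascade deeper
        have hfempty : own B M₂ f = ∅ := Finset.not_nonempty_iff_eq_empty.1 hne
        have hffree : ∀ m ∈ M₂, Disjoint (f ∩ B) (m ∩ B) := own_eq_empty_iff.1 hfempty
        have hfE : f ∈ E := hv.memE f hfL
        obtain ⟨a', ha'⟩ := edge_vertex hs hfE
        have ha'f : a' ∈ f ∩ A := ha' ▸ Finset.mem_singleton_self a'
        have ha'S : a' ∈ sset a0 A B M₂ l₂ := by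
          rw [hsset_tail]
          exact hgood_f.1 ha'f
        have hv₂ : Valid A B X E a0 M₂ l₂ := by
          refine ⟨hpm₂, fun g hg => hmemE₂ g (by simp [hg]),
            (List.pairwise_cons.1 hpwB₂).2, ?_, (List.pairwise_cons.1 hpwOwn₂).2,
            hgood₂tail⟩
          intro g hg
          rw [hfB g hg]
          exact hv.ownNe g (hmemsuf g (by simp [hg]))
        have hlen₂ : l₂.length ≤ n := by
          have := hlen
          simp only [List.length_append, List.length_cons] at this
          omega
        have hfdisL : ∀ g ∈ l₂, Disjoint (f ∩ B) (g ∩ B) :=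
          fun g hg => (List.pairwise_cons.1 hpwB₂).1 g hg
        rcases ih l₂ M₂ f a' hlen₂ hv₂ hfE ha' hffree hfdisL ha'S with hdone | hrec
        · exact Or.inl hdone
        · obtain ⟨M₃, l₁', l₂', f', hsplit, hv₃, hown₃, hcard₃⟩ := hrec
          refine Or.inr ⟨M₃, l₁ ++ f :: l₁', l₂', f', ?_, hv₃, ?_, ?_⟩
          · rw [hsplit]; simp
          · intro g hg
            have hgl₂ : g ∈ l₂ := by rw [hsplit]; simp [hg]
            rw [hown₃ g hg, hfB g hgl₂]
          · have hf'l₂ : f' ∈ l₂ := by rw [hsplit]; simp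
            rw [← hfB f' hf'l₂]
            exact hcard₃

/-- The main loop: from any valid state we can reach a perfect matching of
`insert a0 X`. -/
lemma mainloop {a0 : V} {A B X : Finset V} {E : Finset (Finset V)} {r : ℕ} {φ : ℝ}
    (hs : Setting A B E r φ) (ha0A : a0 ∈ A) (ha0X : a0 ∉ X) :
    ∀ (n : ℕ) (M : Finset (Finset V)) (L : List (Finset V)),
      Valid A B X E a0 M L → psi B M r L ≤ n →
      ∃ M', PM A (insert a0 X) E M' := by
  intro n
  induction n using Nat.strong_induction_on with
  | _ n ih =>
    intro M L hv hpsi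
    obtain ⟨e, he, heS, heT⟩ := exists_uncovered hs ha0A ha0X hv
    obtain ⟨a, ha⟩ := edge_vertex hs he
    have haS : a ∈ sset a0 A B M L := by
      obtain ⟨x, hx⟩ := heS
      have hx' := Finset.mem_inter.1 hx
      have hxA : x ∈ A := sset_subset_A ha0A hv.pm hx'.2
      have : x = a := Finset.mem_singleton.1 (ha ▸ Finset.mem_inter.2 ⟨hx'.1, hxA⟩)
      exact this ▸ hx'.2
    have hmemT : ∀ x, x ∈ e → x ∉ treeT a0 A B M L := by
      intro x hxe hxT
      have : x ∈ e ∩ treeT a0 A B M L := Finset.mem_inter.2 ⟨hxe, hxT⟩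
      rw [heT] at this
      exact absurd this (Finset.notMem_empty x)
    have hLdis : ∀ g ∈ L, Disjoint (e ∩ B) (g ∩ B) := by
      intro g hg
      rw [Finset.disjoint_left]
      intro x hxe hxg
      refine hmemT x (Finset.mem_inter.1 hxe).1 ?_
      exact Finset.mem_union_left _
        (subset_foldr_union (g := fun f => f ∩ B) hg hxg)
    have hLlen : L.length ≤ B.card := length_le_cardB hs hv
    by_cases hfree : own B M e = ∅
    · -- free edge: cascade (or finish at `a0`)
      have hfreem : ∀ m ∈ M, Disjoint (e ∩ B) (m ∩ B) := own_eq_empty_iff.1 hfree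
      rcases cascade hs ha0A ha0X L.length L M e a le_rfl hv he ha hfreem hLdis haS with
        hdone | ⟨M₂, l₁, l₂, f, hsplit, hv₂, hown₂, hcard₂⟩
      · exact hdone
      · subst hsplit
        have hpsi2 : psi B M₂ r (f :: l₂) < psi B M r (l₁ ++ f :: l₂) :=
          psi_trunc_lt (by omega) hown₂ hcard₂
        exact ih (psi B M₂ r (f :: l₂)) (lt_of_lt_of_le hpsi2 hpsi) M₂ (f :: l₂)
          hv₂ le_rfl
    · -- blocked edge: extend the tree
      have hne : (own B M e).Nonempty := Finset.nonempty_iff_ne_empty.2 hfree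
      have hheadOwn : ∀ g ∈ L, Disjoint (ownV A B M e) (ownV A B M g) := by
        intro g hg
        have hsold : ownV A B M g ⊆ sold A B M L := by
          intro x hx
          exact mem_sold.2 ⟨g, hg, hx⟩
        refine Disjoint.mono_right hsold ?_
        rw [Finset.disjoint_left]
        intro x hx hxsold
        obtain ⟨m, hmo, hxm⟩ := mem_ownV.1 hx
        have hmmsE : m ∈ msE a0 A B M L := Finset.mem_filter.2
          ⟨own_subset hmo, ⟨x, Finset.mem_inter.2 ⟨(Finset.mem_inter.1 hxm).1,
            Finset.mem_insert_of_mem hxsold⟩⟩⟩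
        obtain ⟨y, hy⟩ := (mem_own.1 hmo).2
        have hy' := Finset.mem_inter.1 hy
        refine hmemT y (Finset.mem_inter.1 hy'.1).1 ?_
        exact Finset.mem_union_right _
          (Finset.mem_biUnion.2 ⟨m, hmmsE, hy'.2⟩)
      have hv' : Valid A B X E a0 M (e :: L) := by
        refine ⟨hv.pm, ?_, ?_, ?_, ?_, ?_⟩
        · intro g hg
          rcases List.mem_cons.1 hg with rfl | hg'
          · exact he
          · exact hv.memE g hg'
        · exact List.pairwise_cons.2 ⟨hLdis, hv.pwB⟩
        · intro g hg
          rcases List.mem_cons.1 hg with rfl | hg'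
          · exact hne
          · exact hv.ownNe g hg'
        · exact List.pairwise_cons.2 ⟨hheadOwn, hv.pwOwn⟩
        · exact ⟨ha ▸ Finset.singleton_subset_iff.2 haS, hv.good⟩
      have hpsidec : psi B M r (e :: L) < psi B M r L :=
        psi_append_lt hLlen
          (le_trans (card_own_le_inter hv.pm.disj) (hs.hedge e he).2.2.2)
      exact ih (psi B M r (e :: L)) (lt_of_lt_of_le hpsidec hpsi) M (e :: L)
        hv' le_rfl

/-- A perfect matching of any `X ⊆ A` exists. -/
lemma exists_pm {A B : Finset V} {E : Finset (Finset V)} {r : ℕ} {φ : ℝ}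
    (hs : Setting A B E r φ) :
    ∀ X : Finset V, X ⊆ A → ∃ M, PM A X E M := by
  intro X
  induction X using Finset.induction_on with
  | empty =>
      intro _
      exact ⟨∅, ⟨Finset.empty_subset _, by simp, by simp, by simp,
        Finset.empty_subset _⟩⟩
  | @insert a0 X ha0X ihX =>
      intro hins
      have hXA : X ⊆ A := (Finset.subset_insert a0 X).trans hins
      have ha0A : a0 ∈ A := hins (Finset.mem_insert_self a0 X)
      obtain ⟨M, hM⟩ := ihX hXA
      have hv0 : Valid A B X E a0 M [] :=
        ⟨hM, by simp, by simp, by simp, by simp, trivial⟩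
      exact mainloop hs ha0A ha0X (psi B M r []) M [] hv0 le_rfl

end Lemmas

end Stmt13Aux

/-- An `r`-bounded bipartite hypergraph satisfying the `φ`-strong Haxell
condition with `φ > 2r²` has a perfect matching. -/
theorem stmt_13 {V : Type*} [DecidableEq V] (A B : Finset V) (hAB : Disjoint A B)
    (E : Finset (Finset V)) (r : ℕ) (φ : ℝ) (hφ : 2 * (r : ℝ) ^ 2 < φ)
    (hedge : ∀ e ∈ E, e ⊆ A ∪ B ∧ (e ∩ A).card = 1 ∧
      1 ≤ (e ∩ B).card ∧ (e ∩ B).card ≤ r)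
    (hHaxell : ∀ S ⊆ A, ∀ T ⊆ B,
      (∀ e ∈ E, (e ∩ S).Nonempty → (e ∩ T).Nonempty) →
      φ * (S.card : ℝ) ≤ (T.card : ℝ)) :
    ∃ M ⊆ E, (∀ f ∈ M, ∀ g ∈ M, f ≠ g → Disjoint f g) ∧
      ∀ a ∈ A, ∃ e ∈ M, a ∈ e := by
  classical
  rcases Nat.eq_zero_or_pos r with hr0 | hrpos
  · -- degenerate case `r = 0`: then `E = ∅` and `A` must be empty
    subst hr0
    refine ⟨∅, Finset.empty_subset _, by simp, ?_⟩
    intro a haA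
    exfalso
    have hE : ∀ e, e ∉ E := by
      intro e he
      have h := (hedge e he).2.2
      omega
    have hcov : ∀ e ∈ E, (e ∩ ({a} : Finset V)).Nonempty →
        (e ∩ (∅ : Finset V)).Nonempty := fun e he _ => absurd he (hE e)
    have := hHaxell {a} (Finset.singleton_subset_iff.2 haA) ∅
      (Finset.empty_subset _) hcov
    simp at this
    norm_num at hφ
    linarith
  · have hs : Stmt13Aux.Setting A B E r φ := ⟨hφ, hrpos, hedge, hHaxell⟩
    obtain ⟨M, hM⟩ := Stmt13Aux.exists_pm hs A subset_rfl
    exact ⟨M, hM.sub, hM.disj, fun a ha => hM.cov a ha⟩
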